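/- Let $X_1,\dots,X_n$ be negatively associated, identically distributed Bernoulli random variables, $S_n = X_1 + \cdots + X_n$, and $\mu = \mathbb{E}[S_n]$. Then for all $0 \le \delta \le 1$, $\Pr[S_n \le (1-\delta)\mu] \le 2\exp(-\delta^2 \mu / 2)$. -/

import Mathlib

open MeasureTheory ProbabilityTheory

/-- Negative association (see paper, Definition 3.5). -/
def NegAssoc {Ω ι : Type*} [MeasurableSpace Ω] (μ : Measure Ω) (X : ι → Ω → ℝ) : Prop :=
  ∀ (I J : Finset ι), Disjoint I J →
    ∀ (f : (I → ℝ) → ℝ) (g : (J → ℝ) → ℝ),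
      ((Monotone f ∧ Monotone g) ∨ (Antitone f ∧ Antitone g)) →
      Measurable f → Measurable g →
      ∫ ω, f (fun i => X i ω) * g (fun j => X j ω) ∂μ ≤
        (∫ ω, f (fun i => X i ω) ∂μ) * ∫ ω, g (fun j => X j ω) ∂μ

private lemma chernoff_aux_analytic {x : ℝ} (hx0 : 0 ≤ x) (hx1 : x < 1) :
    x ^ 2 / 2 ≤ x + (1 - x) * Real.log (1 - x) := by
  set h : ℝ → ℝ := fun y => y + (1 - y) * Real.log (1 - y) - y ^ 2 / 2 with hh
  have hder : ∀ y ∈ Set.Ioo (0:ℝ) x, HasDerivAt h (-(Real.log (1 - y)) - y) y := by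
    intro y hy
    have h1y : 0 < 1 - y := by linarith [hy.2]
    have d1 : HasDerivAt (fun z : ℝ => 1 - z) (-1) y := by
      simpa using (hasDerivAt_id y).const_sub 1
    have d2 : HasDerivAt (fun z : ℝ => Real.log (1 - z)) ((1 - y)⁻¹ * (-1)) y :=
      (Real.hasDerivAt_log h1y.ne').comp y d1
    have d3 : HasDerivAt (fun z : ℝ => (1 - z) * Real.log (1 - z))
        (-1 * Real.log (1 - y) + (1 - y) * ((1 - y)⁻¹ * (-1))) y := d1.mul d2
    have d5 : HasDerivAt (fun z : ℝ => z ^ 2 / 2) (↑2 * y ^ 1 / 2) y :=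
      (hasDerivAt_pow 2 y).div_const 2
    have d6 := ((hasDerivAt_id y).add d3).sub d5
    convert d6 using 1
    rfl
    rfl
    rfl
    have : (1 - y) * (1 - y)⁻¹ = 1 := mul_inv_cancel₀ h1y.ne'
    simp only [← mul_assoc, this]
    ring
  have hmono : MonotoneOn h (Set.Icc 0 x) := by
    apply monotoneOn_of_deriv_nonneg (convex_Icc 0 x)
    · intro y hy
      have h1y : (1:ℝ) - y ≠ 0 := by have := hy.2; nlinarith [hy.1]
      have hc : ContinuousAt (fun z : ℝ => Real.log (1 - z)) y :=
        (Real.continuousAt_log h1y).comp (continuousAt_const.sub continuousAt_id)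
      exact ContinuousAt.continuousWithinAt (by
        exact (continuousAt_id.add ((continuousAt_const.sub continuousAt_id).mul hc)).sub
          (by fun_prop))
    · rw [interior_Icc]
      exact fun y hy => (hder y hy).differentiableAt.differentiableWithinAt
    · rw [interior_Icc]
      intro y hy
      rw [(hder y hy).deriv]
      have h1y : 0 < 1 - y := by linarith [hy.2]
      have : Real.log (1 - y) ≤ -y :=
        (Real.log_le_iff_le_exp h1y).mpr (by linarith [Real.add_one_le_exp (-y)])
      linarith
  have h0 : h 0 = 0 := by simp [hh]
  have := hmono (Set.mem_Icc.mpr ⟨le_rfl, hx0⟩) (Set.mem_Icc.mpr ⟨hx0, le_rfl⟩) hx0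
  rw [h0] at this
  simp only [hh] at this
  linarith

private lemma chernoff_aux_prod {Ω : Type*} [MeasurableSpace Ω] (μ : Measure Ω)
    [IsProbabilityMeasure μ] (n : ℕ) (X : Fin n → Ω → ℝ)
    (hNA : NegAssoc μ X) (t : ℝ) (ht : t ≤ 0) :
    ∀ s : Finset (Fin n),
      (∫ ω, Real.exp (t * ∑ i ∈ s, X i ω) ∂μ) ≤ ∏ i ∈ s, ∫ ω, Real.exp (t * X i ω) ∂μ := by
  classical
  intro s
  induction s using Finset.induction_on with
  | empty => simp
  | @insert a s ha ih =>
    have hdisj : Disjoint ({a} : Finset (Fin n)) s := by simpa using ha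
    have hNAi := hNA {a} s hdisj
      (fun v => Real.exp (t * v ⟨a, Finset.mem_singleton_self a⟩))
      (fun v => Real.exp (t * ∑ j ∈ s.attach, v j))
      (Or.inr ⟨fun v w hvw => Real.exp_le_exp.mpr (mul_le_mul_of_nonpos_left (hvw _) ht),
        fun v w hvw => Real.exp_le_exp.mpr (mul_le_mul_of_nonpos_left
          (Finset.sum_le_sum fun j _ => hvw j) ht)⟩)
      (Real.measurable_exp.comp (measurable_const.mul (measurable_pi_apply _)))
      (Real.measurable_exp.comp (measurable_const.mul
        (Finset.measurable_sum _ fun j _ => measurable_pi_apply j)))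
    calc ∫ ω, Real.exp (t * ∑ i ∈ insert a s, X i ω) ∂μ
        = ∫ ω, Real.exp (t * X a ω) * Real.exp (t * ∑ j ∈ s.attach, X (↑j) ω) ∂μ := by
          refine integral_congr_ae (ae_of_all _ fun ω => ?_)
          dsimp only
          rw [Finset.sum_attach s (fun j => X j ω), ← Real.exp_add, Finset.sum_insert ha,
            mul_add]
      _ ≤ (∫ ω, Real.exp (t * X a ω) ∂μ) * ∫ ω, Real.exp (t * ∑ j ∈ s.attach, X (↑j) ω) ∂μ :=
          hNAi
      _ = (∫ ω, Real.exp (t * X a ω) ∂μ) * ∫ ω, Real.exp (t * ∑ j ∈ s, X j ω) ∂μ := by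
          congr 1
          refine integral_congr_ae (ae_of_all _ fun ω => ?_)
          dsimp only
          rw [Finset.sum_attach s (fun j => X j ω)]
      _ ≤ (∫ ω, Real.exp (t * X a ω) ∂μ) * ∏ i ∈ s, ∫ ω, Real.exp (t * X i ω) ∂μ :=
          mul_le_mul_of_nonneg_left ih (integral_nonneg fun ω => (Real.exp_pos _).le)
      _ = ∏ i ∈ insert a s, ∫ ω, Real.exp (t * X i ω) ∂μ := by
          rw [Finset.prod_insert ha]

/-- Multiplicative Chernoff lower-tail bound for negatively associated, identically
distributed Bernoulli random variables. -/
theorem chernoff_lower_tail_negAssoc {Ω : Type*} [MeasurableSpace Ω] (μ : Measure Ω)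
    [IsProbabilityMeasure μ] (n : ℕ) (X : Fin n → Ω → ℝ)
    (hmeas : ∀ i, Measurable (X i))
    (hBer : ∀ i, ∀ ω, X i ω = 0 ∨ X i ω = 1)
    (hid : ∀ i j, IdentDistrib (X i) (X j) μ μ)
    (hNA : NegAssoc μ X)
    (δ : ℝ) (hδ0 : 0 ≤ δ) (hδ1 : δ ≤ 1) :
    (μ {ω | ∑ i, X i ω ≤ (1 - δ) * (∫ ω', ∑ i, X i ω' ∂μ)}).toReal ≤
      2 * Real.exp (-δ ^ 2 * (∫ ω', ∑ i, X i ω' ∂μ) / 2) := by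
  classical
  set m : ℝ := ∫ ω', ∑ i, X i ω' ∂μ with hm
  have hX01 : ∀ i ω, 0 ≤ X i ω ∧ X i ω ≤ 1 := by
    intro i ω; rcases hBer i ω with h | h <;> simp [h]
  have hXint : ∀ i, Integrable (X i) μ := by
    intro i
    refine (integrable_const (1:ℝ)).mono' (hmeas i).aestronglyMeasurable ?_
    refine ae_of_all _ fun ω => ?_
    rw [Real.norm_eq_abs, abs_of_nonneg (hX01 i ω).1]; exact (hX01 i ω).2
  have hXi_nonneg : ∀ i, 0 ≤ ∫ ω, X i ω ∂μ := fun i => integral_nonneg fun ω => (hX01 i ω).1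
  have hmsum : m = ∑ i, ∫ ω, X i ω ∂μ := integral_finset_sum _ fun i _ => hXint i
  have hm0 : 0 ≤ m := by
    rw [hmsum]; exact Finset.sum_nonneg fun i _ => hXi_nonneg i
  have hSmeas : Measurable (fun ω => ∑ i, X i ω) :=
    Finset.measurable_sum _ fun i _ => hmeas i
  have hSnn : ∀ ω, 0 ≤ ∑ i, X i ω := fun ω => Finset.sum_nonneg fun i _ => (hX01 i ω).1
  -- the main estimate, for any `d ∈ [0, 1)`
  have main : ∀ d : ℝ, 0 ≤ d → d < 1 →
      (μ {ω | ∑ i, X i ω ≤ (1 - d) * m}).toReal ≤ Real.exp (-d ^ 2 * m / 2) := by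
    intro d hd0 hd1
    have h1d : 0 < 1 - d := by linarith
    set t : ℝ := Real.log (1 - d) with htdef
    have ht : t ≤ 0 := Real.log_nonpos (by linarith) (by linarith)
    have het : Real.exp t = 1 - d := Real.exp_log h1d
    have hint : Integrable (fun ω => Real.exp (t * ∑ i, X i ω)) μ := by
      refine (integrable_const (1:ℝ)).mono'
        ((Real.measurable_exp.comp (measurable_const.mul hSmeas)).aestronglyMeasurable) ?_
      refine ae_of_all _ fun ω => ?_
      rw [Real.norm_eq_abs, abs_of_nonneg (Real.exp_pos _).le]
      calc Real.exp (t * ∑ i, X i ω) ≤ Real.exp 0 :=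
            Real.exp_le_exp.mpr (mul_nonpos_of_nonpos_of_nonneg ht (hSnn ω))
        _ = 1 := Real.exp_zero
    have cher := measure_le_le_exp_mul_mgf (μ := μ) (X := fun ω => ∑ i, X i ω)
      ((1 - d) * m) ht hint
    -- bound the mgf
    have hfac : ∀ i : Fin n, (∫ ω, Real.exp (t * X i ω) ∂μ) ≤
        Real.exp ((Real.exp t - 1) * ∫ ω, X i ω ∂μ) := by
      intro i
      have heq : (∫ ω, Real.exp (t * X i ω) ∂μ)
          = 1 + (Real.exp t - 1) * ∫ ω, X i ω ∂μ := by
        have : (∫ ω, Real.exp (t * X i ω) ∂μ)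
            = ∫ ω, (1 + (Real.exp t - 1) * X i ω) ∂μ := by
          refine integral_congr_ae (ae_of_all _ fun ω => ?_)
          rcases hBer i ω with h | h <;> simp [h, Real.exp_zero]
        rw [this, integral_add (integrable_const _) ((hXint i).const_mul _),
          integral_const, integral_const_mul]
        simp
      rw [heq]
      linarith [Real.add_one_le_exp ((Real.exp t - 1) * ∫ ω, X i ω ∂μ)]
    have hmgf : mgf (fun ω => ∑ i, X i ω) μ t ≤ Real.exp ((Real.exp t - 1) * m) := by
      have h1 := chernoff_aux_prod μ n X hNA t ht Finset.univ
      have h2 : (∏ i, ∫ ω, Real.exp (t * X i ω) ∂μ)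
          ≤ ∏ i, Real.exp ((Real.exp t - 1) * ∫ ω, X i ω ∂μ) :=
        Finset.prod_le_prod (fun i _ => integral_nonneg fun ω => (Real.exp_pos _).le)
          (fun i _ => hfac i)
      have h3 : (∏ i, Real.exp ((Real.exp t - 1) * ∫ ω, X i ω ∂μ))
          = Real.exp ((Real.exp t - 1) * m) := by
        rw [← Real.exp_sum, hmsum, Finset.mul_sum]
      calc mgf (fun ω => ∑ i, X i ω) μ t
          = ∫ ω, Real.exp (t * ∑ i, X i ω) ∂μ := rfl
        _ ≤ ∏ i, ∫ ω, Real.exp (t * X i ω) ∂μ := h1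
        _ ≤ ∏ i, Real.exp ((Real.exp t - 1) * ∫ ω, X i ω ∂μ) := h2
        _ = Real.exp ((Real.exp t - 1) * m) := h3
    have hana := chernoff_aux_analytic hd0 hd1
    calc (μ {ω | ∑ i, X i ω ≤ (1 - d) * m}).toReal
        ≤ Real.exp (-t * ((1 - d) * m)) * mgf (fun ω => ∑ i, X i ω) μ t := cher
      _ ≤ Real.exp (-t * ((1 - d) * m)) * Real.exp ((Real.exp t - 1) * m) :=
          mul_le_mul_of_nonneg_left hmgf (Real.exp_pos _).le
      _ = Real.exp (-t * ((1 - d) * m) + (Real.exp t - 1) * m) := (Real.exp_add _ _).symm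
      _ ≤ Real.exp (-d ^ 2 * m / 2) := by
          apply Real.exp_le_exp.mpr
          rw [het, htdef]
          nlinarith [mul_le_mul_of_nonneg_right hana hm0]
  rcases lt_or_eq_of_le hδ1 with hlt | heq
  · calc (μ {ω | ∑ i, X i ω ≤ (1 - δ) * m}).toReal ≤ Real.exp (-δ ^ 2 * m / 2) :=
        main δ hδ0 hlt
      _ ≤ 2 * Real.exp (-δ ^ 2 * m / 2) := by linarith [Real.exp_pos (-δ ^ 2 * m / 2)]
  · -- δ = 1 : take a limit d ↑ 1
    have hbound : ∀ k : ℕ, (μ {ω | ∑ i, X i ω ≤ (1 - δ) * m}).toReal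
        ≤ 2 * Real.exp (-(1 - (1:ℝ) / (k + 1)) ^ 2 * m / 2) := by
      intro k
      have hk1 : (0:ℝ) < 1 / (k + 1) := by positivity
      have hk2 : (1:ℝ) / (k + 1) ≤ 1 := by
        rw [div_le_one (by positivity)]; linarith [Nat.cast_nonneg (α := ℝ) k]
      set d : ℝ := 1 - 1 / (k + 1) with hd
      have hsub : {ω | ∑ i, X i ω ≤ (1 - δ) * m} ⊆ {ω | ∑ i, X i ω ≤ (1 - d) * m} := by
        intro ω hω
        simp only [Set.mem_setOf_eq] at hω ⊢
        have h0 : (1 - δ) * m = 0 := by rw [heq]; ring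
        have h1 : 0 ≤ (1 - d) * m := by
          apply mul_nonneg _ hm0
          rw [hd]; linarith
        linarith
      have hmono := ENNReal.toReal_mono (measure_ne_top μ _) (measure_mono hsub)
      calc (μ {ω | ∑ i, X i ω ≤ (1 - δ) * m}).toReal
          ≤ (μ {ω | ∑ i, X i ω ≤ (1 - d) * m}).toReal := hmono
        _ ≤ Real.exp (-d ^ 2 * m / 2) := main d (by rw [hd]; linarith) (by rw [hd]; linarith)
        _ ≤ 2 * Real.exp (-d ^ 2 * m / 2) := by linarith [Real.exp_pos (-d ^ 2 * m / 2)]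
    have htend : Filter.Tendsto (fun k : ℕ => 2 * Real.exp (-(1 - (1:ℝ) / (k + 1)) ^ 2 * m / 2))
        Filter.atTop (nhds (2 * Real.exp (-δ ^ 2 * m / 2))) := by
      have h1 : Filter.Tendsto (fun k : ℕ => 1 - (1:ℝ) / (k + 1)) Filter.atTop (nhds δ) := by
        have := tendsto_one_div_add_atTop_nhds_zero_nat (𝕜 := ℝ)
        have := (tendsto_const_nhds (x := (1:ℝ)) (f := Filter.atTop)).sub this
        rw [heq]
        simpa using this
      have hcont : Continuous (fun x : ℝ => 2 * Real.exp (-x ^ 2 * m / 2)) := by fun_prop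
      exact (hcont.tendsto δ).comp h1
    exact ge_of_tendsto' htend hbound
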